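/- Suppose a sequence of positive reals satisfies u_{T_k} ≥ u_{T_{k-1}}·(1 + γ/(S_0 + γ·C_T·k)) for all k ≥ 1, with u_{T_0} = u_0 > 0, γ > 0, S_0 > 0 and C_T > 0. Then there exists c > 0 such that u_{T_k} ≥ c·(k+1)^{1/C_T} for all k ∈ ℕ. -/

import Mathlib

/-- if `v 0 > 0` and `v k ≥ v (k-1) * (1 + γ / (S₀ + γ C_T k))` for
`k ≥ 1`, then there exists `c > 0` with `v k ≥ c * (k+1)^(1/C_T)` for all `k`. -/
theorem stmt_15 (γ S₀ CT : ℝ) (hγ : 0 < γ) (hS₀ : 0 < S₀) (hCT : 0 < CT)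
    (v : ℕ → ℝ) (hv0 : 0 < v 0)
    (hrec : ∀ k : ℕ, v (k + 1) ≥ v k * (1 + γ / (S₀ + γ * CT * (k + 1)))) :
    ∃ c : ℝ, 0 < c ∧ ∀ k : ℕ, c * ((k : ℝ) + 1) ^ (1 / CT) ≤ v k := by
  set p := 1 / CT with hp
  have hp0 : 0 < p := by positivity
  set a := S₀ / γ with ha
  have ha0 : 0 < a := by positivity
  set M := (a + 1) / CT with hM
  have hM0 : 0 < M := by positivity
  have hc0 : 0 < v 0 / (1 + M) ^ p := by positivity
  refine ⟨v 0 / (1 + M) ^ p, hc0, ?_⟩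
  have key : ∀ k : ℕ, v 0 / (1 + M) ^ p * ((k : ℝ) + 1 + M) ^ p ≤ v k := by
    intro k
    induction k with
    | zero =>
      have : ((0 : ℕ) : ℝ) + 1 + M = 1 + M := by push_cast; ring
      rw [this, div_mul_cancel₀]
      positivity
    | succ n ih =>
      set B : ℝ := (n : ℝ) + 1 + M with hB
      have hBpos : 0 < B := by positivity
      set D : ℝ := a + CT * ((n : ℝ) + 1) with hD
      have hDpos : 0 < D := by positivity
      have hCTB : CT * B = D + 1 := by
        rw [hB, hD, hM]
        field_simp
        ring
      -- rewrite the recurrence term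
      have hden : 0 < S₀ + γ * CT * ((n : ℝ) + 1) := by positivity
      have hterm : γ / (S₀ + γ * CT * ((n : ℝ) + 1)) = 1 / D := by
        rw [div_eq_div_iff hden.ne' hDpos.ne', hD, ha]
        field_simp
      -- key analytic inequality : (B+1)^p ≤ B^p * (1 + 1/D)
      have hlog : Real.log (1 + 1 / B) ≤ 1 / B := by
        have := Real.log_le_sub_one_of_pos (x := 1 + 1 / B) (by positivity)
        linarith
      have hexp : Real.exp (1 / (D + 1)) ≤ 1 + 1 / D := by
        set t := 1 / (D + 1) with ht
        have ht1 : t < 1 := by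
          rw [ht, div_lt_one (by positivity)]; linarith
        have h1 : 1 - t ≤ Real.exp (-t) := by
          have := Real.add_one_le_exp (-t); linarith
        have h2 : Real.exp t * (1 - t) ≤ 1 := by
          calc Real.exp t * (1 - t) ≤ Real.exp t * Real.exp (-t) :=
                mul_le_mul_of_nonneg_left h1 (Real.exp_pos t).le
            _ = 1 := by rw [← Real.exp_add]; simp
        have h3 : Real.exp t ≤ 1 / (1 - t) := by
          rw [le_div_iff₀ (by linarith)]; exact h2
        have h4 : 1 / (1 - t) = 1 + 1 / D := by rw [ht]; field_simp; simp [hDpos.ne']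
        linarith
      have hpow : (1 + 1 / B) ^ p ≤ 1 + 1 / D := by
        rw [Real.rpow_def_of_pos (by positivity)]
        have h1 : Real.log (1 + 1 / B) * p ≤ 1 / B * p := by
          apply mul_le_mul_of_nonneg_right hlog hp0.le
        have h2 : 1 / B * p = 1 / (D + 1) := by
          rw [hp, ← hCTB]; field_simp
        calc Real.exp (Real.log (1 + 1 / B) * p) ≤ Real.exp (1 / (D + 1)) := by
              apply Real.exp_le_exp.mpr; rw [← h2]; exact h1
          _ ≤ 1 + 1 / D := hexp
      have hkey : (B + 1) ^ p ≤ B ^ p * (1 + 1 / D) := by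
        have hBe : B + 1 = B * (1 + 1 / B) := by field_simp
        rw [hBe, Real.mul_rpow hBpos.le (by positivity)]
        exact mul_le_mul_of_nonneg_left hpow (by positivity)
      -- combine
      have hrn := hrec n
      have hvn : 0 < v n := lt_of_lt_of_le (by positivity) ih
      have step1 : v 0 / (1 + M) ^ p * (B + 1) ^ p ≤
          (v 0 / (1 + M) ^ p * B ^ p) * (1 + 1 / D) := by
        rw [mul_assoc]
        exact mul_le_mul_of_nonneg_left hkey hc0.le
      have step2 : (v 0 / (1 + M) ^ p * B ^ p) * (1 + 1 / D) ≤
          v n * (1 + 1 / D) := by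
        apply mul_le_mul_of_nonneg_right ih
        positivity
      have hcast : ((n + 1 : ℕ) : ℝ) + 1 + M = B + 1 := by
        rw [hB]; push_cast; ring
      rw [hcast]
      calc v 0 / (1 + M) ^ p * (B + 1) ^ p ≤ v n * (1 + 1 / D) := le_trans step1 step2
        _ ≤ v (n + 1) := by rw [← hterm]; exact hrn
  intro k
  calc v 0 / (1 + M) ^ p * ((k : ℝ) + 1) ^ p
      ≤ v 0 / (1 + M) ^ p * ((k : ℝ) + 1 + M) ^ p := by
        apply mul_le_mul_of_nonneg_left _ hc0.le
        apply Real.rpow_le_rpow (by positivity) (by linarith) hp0.le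
    _ ≤ v k := key k
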